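/- Let a, m₄, m₅ be real constants and set m₁ := (−3a + m₄ + 2m₅)/72, m₂ := (15a − 2m₄ − 4m₅)/36, m₃ := (−15a + 5m₄ + 4m₅)/12. Then the soliton function u(t,x) := sech²(x − at) = 1/cosh²(x − at) satisfies u_t + m₁ u_{xxxxx} + m₂ u_{xxx} + m₃ u u_{xxx} + m₄ u u_x + m₅ u_x u_{xx} = 0 at every point (t,x). -/

import Mathlib

/-- Partial derivative of `u(t,x)` with respect to `t`. -/
noncomputable def pdt (u : ℝ × ℝ → ℝ) (t x : ℝ) : ℝ :=
  deriv (fun s => u (s, x)) t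

/-- `n`-th partial derivative of `u(t,x)` with respect to `x`. -/
noncomputable def pdx (n : ℕ) (u : ℝ × ℝ → ℝ) (t x : ℝ) : ℝ :=
  iteratedDeriv n (fun y => u (t, y)) x

/-- The successive `x`-derivatives of `sech² z`, written explicitly in terms of
`sinh` and `cosh`. -/
noncomputable def solG : ℕ → ℝ → ℝ
  | 0, z => (1 / Real.cosh z) ^ 2
  | 1, z => -2 * Real.sinh z / Real.cosh z ^ 3
  | 2, z => 4 / Real.cosh z ^ 2 - 6 / Real.cosh z ^ 4
  | 3, z => -8 * Real.sinh z / Real.cosh z ^ 3 + 24 * Real.sinh z / Real.cosh z ^ 5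
  | 4, z => 16 / Real.cosh z ^ 2 - 120 / Real.cosh z ^ 4 + 120 / Real.cosh z ^ 6
  | _, z => -32 * Real.sinh z / Real.cosh z ^ 3 + 480 * Real.sinh z / Real.cosh z ^ 5
      - 720 * Real.sinh z / Real.cosh z ^ 7

lemma solG_hasDerivAt (k : ℕ) (hk : k ≤ 4) (z : ℝ) :
    HasDerivAt (solG k) (solG (k+1) z) z := by
  have hc : Real.cosh z ≠ 0 := (Real.cosh_pos z).ne'
  have hcp : ∀ n : ℕ, Real.cosh z ^ n ≠ 0 := fun n => pow_ne_zero n hc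
  have hS : HasDerivAt Real.sinh (Real.cosh z) z := Real.hasDerivAt_sinh z
  have hC : HasDerivAt Real.cosh (Real.sinh z) z := Real.hasDerivAt_cosh z
  interval_cases k
  · have := ((hasDerivAt_const z (1:ℝ)).div hC hc).pow 2
    replace this : HasDerivAt (solG 0) _ z := this
    convert this using 1
    simp only [solG, Pi.pow_apply, Pi.div_apply]
    push_cast
    ring
  · have := ((hS.const_mul (-2:ℝ)).div (hC.pow 3) (hcp 3))
    replace this : HasDerivAt (solG 1) _ z := this
    convert this using 1
    simp only [solG, Pi.pow_apply, Pi.div_apply]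
    push_cast
    field_simp
    ring_nf
    simp only [Real.sinh_sq]
    ring
  · have := (((hasDerivAt_const z (4:ℝ)).div (hC.pow 2) (hcp 2)).sub
      ((hasDerivAt_const z (6:ℝ)).div (hC.pow 4) (hcp 4)))
    replace this : HasDerivAt (solG 2) _ z := this
    convert this using 1
    simp only [solG, Pi.pow_apply, Pi.div_apply]
    push_cast
    field_simp
    ring
  · have := (((hS.const_mul (-8:ℝ)).div (hC.pow 3) (hcp 3)).add
      ((hS.const_mul (24:ℝ)).div (hC.pow 5) (hcp 5)))
    replace this : HasDerivAt (solG 3) _ z := this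
    convert this using 1
    simp only [solG, Pi.pow_apply, Pi.div_apply]
    push_cast
    field_simp
    ring_nf
    simp only [Real.sinh_sq]
    ring
  · have := ((((hasDerivAt_const z (16:ℝ)).div (hC.pow 2) (hcp 2)).sub
      ((hasDerivAt_const z (120:ℝ)).div (hC.pow 4) (hcp 4))).add
      ((hasDerivAt_const z (120:ℝ)).div (hC.pow 6) (hcp 6)))
    replace this : HasDerivAt (solG 4) _ z := this
    convert this using 1
    simp only [solG, Pi.pow_apply, Pi.div_apply]
    push_cast
    field_simp
    ring

lemma solG_shift_hasDerivAt (k : ℕ) (hk : k ≤ 4) (b y : ℝ) :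
    HasDerivAt (fun z => solG k (z - b)) (solG (k+1) (y - b)) y := by
  have h := (solG_hasDerivAt k hk (y - b)).comp y ((hasDerivAt_id y).sub_const b)
  simp at h
  exact h

lemma solG_shift_deriv (k : ℕ) (hk : k ≤ 4) (b : ℝ) :
    deriv (fun z => solG k (z - b)) = fun y => solG (k+1) (y - b) := by
  funext y
  exact (solG_shift_hasDerivAt k hk b y).deriv

lemma solG_iteratedDeriv (k : ℕ) (hk : k ≤ 5) (b : ℝ) :
    iteratedDeriv k (fun z => solG 0 (z - b)) = fun y => solG k (y - b) := by
  interval_cases k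
  · simp [iteratedDeriv_zero]
  · rw [iteratedDeriv_one, solG_shift_deriv 0 (by norm_num)]
  · rw [iteratedDeriv_succ, iteratedDeriv_one, solG_shift_deriv 0 (by norm_num),
      solG_shift_deriv 1 (by norm_num)]
  · rw [iteratedDeriv_succ, iteratedDeriv_succ, iteratedDeriv_one,
      solG_shift_deriv 0 (by norm_num), solG_shift_deriv 1 (by norm_num),
      solG_shift_deriv 2 (by norm_num)]
  · rw [iteratedDeriv_succ, iteratedDeriv_succ, iteratedDeriv_succ, iteratedDeriv_one,
      solG_shift_deriv 0 (by norm_num), solG_shift_deriv 1 (by norm_num),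
      solG_shift_deriv 2 (by norm_num), solG_shift_deriv 3 (by norm_num)]
  · rw [iteratedDeriv_succ, iteratedDeriv_succ, iteratedDeriv_succ, iteratedDeriv_succ,
      iteratedDeriv_one,
      solG_shift_deriv 0 (by norm_num), solG_shift_deriv 1 (by norm_num),
      solG_shift_deriv 2 (by norm_num), solG_shift_deriv 3 (by norm_num),
      solG_shift_deriv 4 (by norm_num)]

/-- The soliton solution `u = sech²(x − at)` of the constant-coefficient
fifth-order KdV equation (17). -/
theorem soliton_solution
    (a m₄ m₅ : ℝ)
    (m₁ m₂ m₃ : ℝ)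
    (hm₁ : m₁ = (-3 * a + m₄ + 2 * m₅) / 72)
    (hm₂ : m₂ = (15 * a - 2 * m₄ - 4 * m₅) / 36)
    (hm₃ : m₃ = (-15 * a + 5 * m₄ + 4 * m₅) / 12)
    (u : ℝ × ℝ → ℝ)
    (hu : ∀ p : ℝ × ℝ, u p = (1 / Real.cosh (p.2 - a * p.1)) ^ 2) :
    ∀ t x,
      pdt u t x + m₁ * pdx 5 u t x + m₂ * pdx 3 u t x
        + m₃ * u (t, x) * pdx 3 u t x + m₄ * u (t, x) * pdx 1 u t x
        + m₅ * pdx 1 u t x * pdx 2 u t x = 0 := by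
  intro t x
  have hux : (fun y => u (t, y)) = fun y => solG 0 (y - a * t) := by
    funext y; rw [hu]; rfl
  have hpdx : ∀ k : ℕ, k ≤ 5 → pdx k u t x = solG k (x - a * t) := by
    intro k hk
    rw [pdx, hux, solG_iteratedDeriv k hk]
  have hut : (fun s => u (s, x)) = fun s => solG 0 (x - a * s) := by
    funext s; rw [hu]; rfl
  have hpdt : pdt u t x = solG 1 (x - a * t) * (0 - a * 1) := by
    rw [pdt, hut]
    have hin : HasDerivAt (fun s : ℝ => x - a * s) (0 - a * 1) t :=
      (hasDerivAt_const t x).sub ((hasDerivAt_id t).const_mul a)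
    exact ((solG_hasDerivAt 0 (by norm_num) (x - a * t)).comp t hin).deriv
  rw [hpdt, hpdx 5 (by norm_num), hpdx 3 (by norm_num), hpdx 2 (by norm_num),
    hpdx 1 (by norm_num), hu]
  simp only [solG]
  have hc : Real.cosh (x - a * t) ≠ 0 := (Real.cosh_pos _).ne'
  subst hm₁ hm₂ hm₃
  field_simp
  ring
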